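/- Let J be a finite index type and let m, b : J → ℕ satisfy m j ≥ 1 and b j ≥ 1 for all j. Suppose ∑_{j∈J} (m j)·(b j) = 10, ∑_{j∈J} ((m j)·(b j))/((m j)+1) < 2 in ℚ, and the maximum of m over J equals 6. Then the multiset {(m j, b j) : j ∈ J} equals {(6,1),(4,1)}. -/

import Mathlib

lemma aux_term_ge (M B : ℕ) (hM : 1 ≤ M) (hB : 1 ≤ B) (h3 : M * B ≤ 3) :
    (1:ℚ)/2 + ((M:ℚ)*(B:ℚ) - 1)/8 ≤ (M:ℚ)*(B:ℚ)/((M:ℚ)+1) := by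
  have hM3 : M ≤ 3 := by nlinarith
  have hB3 : B ≤ 3 := by nlinarith
  interval_cases M <;> interval_cases B <;> (try norm_num at h3) <;> norm_num

lemma aux_case1 (M B : ℕ) (hM : 1 ≤ M) (hM6 : M ≤ 6) (hB : 1 ≤ B)
    (h4 : M * B = 4) (hlt : (M:ℚ)*(B:ℚ)/((M:ℚ)+1) < 8/7) : M = 4 ∧ B = 1 := by
  have hB4 : B ≤ 4 := by nlinarith
  interval_cases M <;> interval_cases B <;>
    first
      | omega
      | (norm_num at hlt)

/-- Numerical core of case (5) of Proposition 3.5 (maximal multiplicity α = 6). -/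
theorem genus_six_classification_alpha_six
    (J : Type*) [Fintype J]
    (m b : J → ℕ) (hm : ∀ j, 1 ≤ m j) (hb : ∀ j, 1 ≤ b j)
    (hsum : ∑ j, m j * b j = 10)
    (hlt : ∑ j, ((m j : ℚ) * (b j : ℚ)) / ((m j : ℚ) + 1) < 2)
    (hmax : Finset.univ.sup m = 6) :
    Finset.univ.val.map (fun j => (m j, b j)) = ({(6,1),(4,1)} : Multiset (ℕ × ℕ)) := by
  classical
  have hne : (Finset.univ : Finset J).Nonempty := by
    by_contra h
    rw [Finset.not_nonempty_iff_eq_empty] at h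
    rw [h] at hmax
    simp at hmax
  obtain ⟨j0, -, hj0⟩ := Finset.exists_mem_eq_sup Finset.univ hne m
  have hmj0 : m j0 = 6 := hj0.symm.trans hmax
  have hj0mem : j0 ∈ (Finset.univ : Finset J) := Finset.mem_univ j0
  have hsplit : m j0 * b j0 + ∑ j ∈ Finset.univ.erase j0, m j * b j = 10 :=
    (Finset.add_sum_erase Finset.univ (fun j => m j * b j) hj0mem).trans hsum
  have hb0 : b j0 = 1 := by
    have h1 : m j0 * b j0 ≤ 10 := Nat.le.intro hsplit
    have h2 := hb j0
    rw [hmj0] at h1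
    omega
  have hs4 : ∑ j ∈ Finset.univ.erase j0, m j * b j = 4 := by
    rw [hmj0, hb0] at hsplit; omega
  have hsplitQ : ((m j0:ℚ)*(b j0:ℚ))/((m j0:ℚ)+1)
      + ∑ j ∈ Finset.univ.erase j0, ((m j:ℚ)*(b j:ℚ))/((m j:ℚ)+1) < 2 :=
    (Finset.add_sum_erase Finset.univ
      (fun j => ((m j:ℚ)*(b j:ℚ))/((m j:ℚ)+1)) hj0mem).trans_lt hlt
  have hterm : ((m j0:ℚ)*(b j0:ℚ))/((m j0:ℚ)+1) = 6/7 := by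
    rw [hmj0, hb0]; norm_num
  have hltQ : ∑ j ∈ Finset.univ.erase j0, ((m j:ℚ)*(b j:ℚ))/((m j:ℚ)+1) < 8/7 := by
    rw [hterm] at hsplitQ
    linarith
  have hone : ∀ j ∈ Finset.univ.erase j0, 1 ≤ m j * b j := fun j _ => by
    have := Nat.mul_le_mul (hm j) (hb j); simpa using this
  rcases Nat.lt_or_ge (Finset.univ.erase j0).card 2 with hc | hc
  · -- card s ≤ 1
    have hcard1 : (Finset.univ.erase j0).card = 1 := by
      by_contra h
      have h0 : (Finset.univ.erase j0).card = 0 := by omega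
      rw [Finset.card_eq_zero] at h0
      rw [h0] at hs4
      simp at hs4
    obtain ⟨j1, hs1⟩ := Finset.card_eq_one.mp hcard1
    rw [hs1, Finset.sum_singleton] at hs4 hltQ
    have hm6 : m j1 ≤ 6 := hmax ▸ Finset.le_sup (Finset.mem_univ j1)
    obtain ⟨hM4, hB1⟩ := aux_case1 (m j1) (b j1) (hm j1) hm6 (hb j1)
      hs4 (by exact_mod_cast hltQ)
    have hj0ne : j0 ∉ Finset.univ.erase j0 := Finset.notMem_erase j0 _
    have huniv : (Finset.univ : Finset J).val = j0 ::ₘ j1 ::ₘ 0 := by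
      rw [← Finset.insert_erase hj0mem, Finset.insert_val_of_notMem hj0ne, hs1]
      rfl
    rw [huniv]
    simp [hmj0, hb0, hM4, hB1]
  · -- card s ≥ 2 : contradiction
    exfalso
    have hn3 : ∀ j ∈ Finset.univ.erase j0, m j * b j ≤ 3 := by
      intro j hj
      have h1 : m j * b j + ∑ i ∈ (Finset.univ.erase j0).erase j, m i * b i = 4 :=
        (Finset.add_sum_erase _ (fun i => m i * b i) hj).trans hs4
      have h2 : ((Finset.univ.erase j0).erase j).card ≤ ∑ i ∈ (Finset.univ.erase j0).erase j, m i * b i := by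
        calc ((Finset.univ.erase j0).erase j).card = ∑ _i ∈ (Finset.univ.erase j0).erase j, 1 := by simp
          _ ≤ _ := Finset.sum_le_sum (fun i hi => hone i (Finset.mem_of_mem_erase hi))
      have h3 : ((Finset.univ.erase j0).erase j).card = (Finset.univ.erase j0).card - 1 := Finset.card_erase_of_mem hj
      omega
    have hlow : ∀ j ∈ Finset.univ.erase j0, (1:ℚ)/2 + ((m j:ℚ)*(b j:ℚ) - 1)/8
        ≤ (m j:ℚ)*(b j:ℚ)/((m j:ℚ)+1) :=
      fun j hj => aux_term_ge _ _ (hm j) (hb j) (hn3 j hj)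
    have hsumlow := Finset.sum_le_sum hlow
    have hcast : ∑ j ∈ Finset.univ.erase j0, (m j:ℚ)*(b j:ℚ) = 4 := by exact_mod_cast hs4
    have hexp : ∑ j ∈ Finset.univ.erase j0, ((1:ℚ)/2 + ((m j:ℚ)*(b j:ℚ) - 1)/8)
        = ((Finset.univ.erase j0).card : ℚ)/2 + (4 - ((Finset.univ.erase j0).card : ℚ))/8 := by
      rw [Finset.sum_add_distrib, Finset.sum_const, nsmul_eq_mul,
        ← Finset.sum_div, Finset.sum_sub_distrib, hcast, Finset.sum_const, nsmul_eq_mul]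
      ring
    rw [hexp] at hsumlow
    have hc2 : (2:ℚ) ≤ ((Finset.univ.erase j0).card : ℚ) := by exact_mod_cast hc
    linarith
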